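/- arXiv:1304.5586 — 5 statements merged into one kernel-verified Lean document; each statement's English description precedes it below -/
import Mathlib

section
/- For every y in (0,1) and x in [0,1], the infinite product ∏_{i=0}^{∞} (1 - x y^i) is bounded below by (1-x)^{1 - 1/log y}. -/
open Real

/-- Weighted AM-GM gives `(1-x)^t ≤ 1 - x*t` for `t, x ∈ [0,1]`. -/
lemma aux_rpow_le (x t : ℝ) (hx0 : 0 ≤ x) (hx1 : x ≤ 1) (ht0 : 0 ≤ t) (ht1 : t ≤ 1) :
    (1 - x) ^ t ≤ 1 - x * t := by
  have h := Real.geom_mean_le_arith_mean2_weighted (w₁ := 1 - t) (w₂ := t)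
    (p₁ := 1) (p₂ := 1 - x) (by linarith) ht0 zero_le_one (by linarith) (by ring)
  rw [Real.one_rpow] at h
  nlinarith [h]

/-- For every `y ∈ (0,1)` and `x ∈ [0,1]`, the infinite product `∏_{i=0}^∞ (1 - x y^i)`
is bounded below by `(1-x)^(1 - 1/log y)`. -/
theorem stmt0 (x y : ℝ) (hy : y ∈ Set.Ioo (0:ℝ) 1) (hx : x ∈ Set.Icc (0:ℝ) 1) :
    (1 - x) ^ (1 - 1 / Real.log y) ≤ ∏' i : ℕ, (1 - x * y ^ i) := by
  obtain ⟨hy0, hy1⟩ := hy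
  obtain ⟨hx0, hx1⟩ := hx
  have hlogy : Real.log y < 0 := Real.log_neg hy0 hy1
  -- exponent comparison : 1/(1-y) ≤ 1 - 1/log y
  have hexp : 1 / (1 - y) ≤ 1 - 1 / Real.log y := by
    have h1 : Real.log y⁻¹ ≤ y⁻¹ - 1 := Real.log_le_sub_one_of_pos (by positivity)
    rw [Real.log_inv] at h1
    have h2 : -(y * Real.log y) ≤ 1 - y := by
      have := mul_le_mul_of_nonneg_left h1 hy0.le
      field_simp at this ⊢
      nlinarith
    rw [div_le_iff₀ (by linarith)]
    have h3 : (1 - 1 / Real.log y) * (1 - y) = (1 - y) - (1 - y) / Real.log y := by ring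
    rw [h3, le_sub_iff_add_le]
    have h4 : (1 - y) / Real.log y = -((1 - y) / (-Real.log y)) := by
      rw [div_neg]; ring
    rw [h4]
    have h5 : y ≤ (1 - y) / (-Real.log y) := by
      rw [le_div_iff₀ (by linarith)]
      nlinarith
    linarith
  rcases eq_or_lt_of_le hx1 with hx1 | hx1
  · -- x = 1 : RHS of rpow is 0, product is nonneg
    have h0 : (1 - x) ^ (1 - 1 / Real.log y) = 0 := by
      rw [hx1, sub_self]
      apply Real.zero_rpow
      have : (0:ℝ) < 1 / (1 - y) := div_pos one_pos (by linarith)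
      intro h; rw [h] at hexp; linarith
    rw [h0]
    by_cases hm : Multipliable (fun i : ℕ => 1 - x * y ^ i)
    · refine ge_of_tendsto hm.hasProd (Filter.Eventually.of_forall fun s => ?_)
      apply Finset.prod_nonneg
      intro i _
      have : y ^ i ≤ 1 := pow_le_one₀ hy0.le hy1.le
      nlinarith
    · rw [tprod_eq_one_of_not_multipliable hm]; norm_num
  · -- x < 1
    set c : ℝ := 1 - x with hc
    have hc0 : 0 < c := by simp [hc]; linarith
    have hc1 : c ≤ 1 := by simp [hc]; linarith
    have hyi1 : ∀ i : ℕ, y ^ i ≤ 1 := fun i => pow_le_one₀ hy0.le hy1.le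
    have hyi0 : ∀ i : ℕ, 0 ≤ y ^ i := fun i => pow_nonneg hy0.le i
    have hpos : ∀ i : ℕ, 0 < 1 - x * y ^ i := by
      intro i
      nlinarith [hyi1 i, hyi0 i]
    -- key pointwise bound: y^i * log c ≤ log (1 - x y^i)
    have hkey : ∀ i : ℕ, y ^ i * Real.log c ≤ Real.log (1 - x * y ^ i) := by
      intro i
      have h := aux_rpow_le x (y ^ i) hx0 hx1.le (hyi0 i) (hyi1 i)
      have := Real.log_le_log (by positivity) h
      rwa [Real.log_rpow hc0] at this
    have hlognp : ∀ i : ℕ, Real.log (1 - x * y ^ i) ≤ 0 := by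
      intro i
      apply Real.log_nonpos (hpos i).le
      nlinarith [hyi0 i, mul_nonneg hx0 (hyi0 i)]
    -- summability of the logs
    have hgs : Summable (fun i : ℕ => y ^ i * (-Real.log c)) :=
      (summable_geometric_of_lt_one hy0.le hy1).mul_right _
    have hsum : Summable (fun i : ℕ => Real.log (1 - x * y ^ i)) := by
      have : Summable (fun i : ℕ => -Real.log (1 - x * y ^ i)) := by
        apply hgs.of_nonneg_of_le (fun i => by linarith [hlognp i])
        intro i
        have := hkey i
        nlinarith
      simpa using this.neg
    -- the product equals exp of the sum of logs
    have hprod : HasProd (fun i : ℕ => 1 - x * y ^ i)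
        (Real.exp (∑' i : ℕ, Real.log (1 - x * y ^ i))) := by
      have := hsum.hasSum.rexp
      refine this.congr_fun fun i => ?_
      simp [Function.comp, Real.exp_log (hpos i)]
    rw [hprod.tprod_eq]
    -- compare sums
    have hsumgeo : Summable (fun i : ℕ => y ^ i * Real.log c) :=
      (summable_geometric_of_lt_one hy0.le hy1).mul_right _
    have htsum : ∑' i : ℕ, y ^ i * Real.log c ≤ ∑' i : ℕ, Real.log (1 - x * y ^ i) :=
      Summable.tsum_le_tsum hkey hsumgeo hsum
    have hgeosum : ∑' i : ℕ, y ^ i * Real.log c = Real.log c * (1 / (1 - y)) := by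
      rw [tsum_mul_right, tsum_geometric_of_lt_one hy0.le hy1]
      ring
    calc c ^ (1 - 1 / Real.log y) ≤ c ^ (1 / (1 - y)) :=
          Real.rpow_le_rpow_of_exponent_ge hc0 hc1 hexp
      _ = Real.exp (Real.log c * (1 / (1 - y))) := by
          rw [Real.rpow_def_of_pos hc0]
      _ ≤ Real.exp (∑' i : ℕ, Real.log (1 - x * y ^ i)) := by
          apply Real.exp_le_exp.mpr
          rw [← hgeosum]; exact htsum
end

section
/- For every y in (0,1), x in [0,1), and natural number N, the finite product ∏_{i=0}^{N} (1 - x y^i) is bounded below by exp(-(log(1 - x/y) - log(1 - x y^{N+1}))/log y), provided x/y < 1. -/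
/-- Key per-term inequality: for `0 < y < 1`, `0 ≤ u`, `u/y < 1`,
`log y * log (1-u) ≤ log (1-u) - log (1-u/y)`. -/
lemma key_ineq (y u : ℝ) (hy0 : 0 < y) (hy1 : y < 1) (hu : 0 ≤ u) (huy : u / y < 1) :
    Real.log y * Real.log (1 - u) ≤ Real.log (1 - u) - Real.log (1 - u / y) := by
  have hu1 : u < 1 := by
    have h : u ≤ u / y := by
      rw [le_div_iff₀ hy0]; nlinarith
    linarith
  have h1u : (0:ℝ) < 1 - u := by linarith
  have h1uy : (0:ℝ) < 1 - u / y := by linarith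
  have ha : -Real.log y ≤ 1 / y - 1 := by
    have h := Real.log_le_sub_one_of_pos (show (0:ℝ) < 1/y by positivity)
    rw [one_div, Real.log_inv] at h
    rw [one_div]
    linarith
  have hb : -Real.log (1 - u) ≤ u / (1 - u) := by
    have h := Real.log_le_sub_one_of_pos (show (0:ℝ) < (1-u)⁻¹ by positivity)
    rw [Real.log_inv] at h
    have he : (1-u)⁻¹ - 1 = u / (1-u) := by field_simp; ring
    linarith
  have hbnn : 0 ≤ -Real.log (1 - u) := by
    have := Real.log_nonpos (by linarith) (by linarith : 1 - u ≤ 1)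
    linarith
  have hann : 0 ≤ 1 / y - 1 := by
    have h : 1 ≤ 1 / y := by
      rw [le_div_iff₀ hy0]; linarith
    linarith
  have hab : (-Real.log y) * (-Real.log (1-u)) ≤ (1/y - 1) * (u/(1-u)) :=
    mul_le_mul ha hb hbnn hann
  have hd : Real.log (1 - u/y) - Real.log (1 - u) ≤ (1 - u/y)/(1-u) - 1 := by
    have h := Real.log_le_sub_one_of_pos (show (0:ℝ) < (1-u/y)/(1-u) by positivity)
    rwa [Real.log_div (ne_of_gt h1uy) (ne_of_gt h1u)] at h
  have heq : (1/y - 1) * (u/(1-u)) = 1 - (1 - u/y)/(1-u) := by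
    field_simp
    ring
  have h0 : Real.log y * Real.log (1-u) = (-Real.log y) * (-Real.log (1-u)) := by ring
  linarith [h0 ▸ hab]

/-- For `y ∈ (0,1)`, `x ∈ [0,1)` with `x/y < 1`, and `N : ℕ`, the finite product
`∏_{i=0}^{N} (1 - x y^i)` is bounded below by
`exp(-(log(1 - x/y) - log(1 - x y^{N+1})) / log y)`. -/
theorem stmt1 (x y : ℝ) (N : ℕ) (hy : y ∈ Set.Ioo (0:ℝ) 1) (hx : x ∈ Set.Ico (0:ℝ) 1)
    (hxy : x / y < 1) :
    Real.exp (-(Real.log (1 - x / y) - Real.log (1 - x * y ^ (N + 1))) / Real.log y) ≤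
      ∏ i ∈ Finset.range (N + 1), (1 - x * y ^ i) := by
  obtain ⟨hy0, hy1⟩ := hy
  obtain ⟨hx0, hx1⟩ := hx
  have hly : Real.log y < 0 := Real.log_neg hy0 hy1
  have hpow : ∀ i : ℕ, y ^ i ≤ 1 := fun i => pow_le_one₀ hy0.le hy1.le
  have hpowpos : ∀ i : ℕ, 0 < y ^ i := fun i => pow_pos hy0 i
  have hpos : ∀ i : ℕ, 0 < 1 - x * y ^ i := by
    intro i
    nlinarith [hpow i, hpowpos i]
  have hdiv : ∀ i : ℕ, x * y ^ i / y < 1 := by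
    intro i
    have h1 : x * y ^ i / y ≤ x / y := by
      gcongr
      nlinarith [hpow i, hpowpos i]
    linarith
  -- per-term inequality
  have hterm : ∀ i ∈ Finset.range (N+1),
      Real.log y * Real.log (1 - x * y ^ i) ≤
        Real.log (1 - x * y ^ (i+1) / y) - Real.log (1 - x * y ^ i / y) := by
    intro i _
    have hk := key_ineq y (x * y ^ i) hy0 hy1 (by positivity) (hdiv i)
    have he : x * y ^ (i+1) / y = x * y ^ i := by
      field_simp [pow_succ]
      ring
    rw [he]
    exact hk
  have hsum := Finset.sum_le_sum hterm
  have htel : ∑ i ∈ Finset.range (N+1),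
      (Real.log (1 - x * y ^ (i+1) / y) - Real.log (1 - x * y ^ i / y))
      = Real.log (1 - x * y ^ (N+1) / y) - Real.log (1 - x * y ^ 0 / y) :=
    Finset.sum_range_sub (fun i => Real.log (1 - x * y ^ i / y)) (N+1)
  rw [htel] at hsum
  rw [← Finset.mul_sum] at hsum
  simp only [pow_zero, mul_one] at hsum
  -- compare the tail logs
  have hDle : Real.log (1 - x * y ^ (N+1) / y) ≤ Real.log (1 - x * y ^ (N+1)) := by
    apply Real.log_le_log (by linarith [hdiv (N+1)])
    have : x * y ^ (N+1) ≤ x * y ^ (N+1) / y := by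
      rw [le_div_iff₀ hy0]
      nlinarith [mul_nonneg hx0 (hpowpos (N+1)).le]
    linarith
  set S := ∑ i ∈ Finset.range (N+1), Real.log (1 - x * y ^ i) with hSdef
  have hS : Real.log y * S ≤ Real.log (1 - x * y ^ (N+1)) - Real.log (1 - x / y) := by
    linarith
  have hES : -(Real.log (1 - x / y) - Real.log (1 - x * y ^ (N+1))) / Real.log y ≤ S := by
    rw [neg_sub, div_le_iff_of_neg hly]
    calc S * Real.log y = Real.log y * S := mul_comm _ _
      _ ≤ _ := hS
  have hprodpos : 0 < ∏ i ∈ Finset.range (N+1), (1 - x * y ^ i) :=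
    Finset.prod_pos fun i _ => hpos i
  have hlogprod : Real.log (∏ i ∈ Finset.range (N+1), (1 - x * y ^ i)) = S := by
    rw [hSdef]
    exact Real.log_prod fun i _ => ne_of_gt (hpos i)
  calc Real.exp (-(Real.log (1 - x / y) - Real.log (1 - x * y ^ (N + 1))) / Real.log y)
      ≤ Real.exp S := Real.exp_le_exp.mpr hES
    _ = ∏ i ∈ Finset.range (N+1), (1 - x * y ^ i) := by
        rw [← hlogprod, Real.exp_log hprodpos]
end

section
/- Let X = (X₁, ..., Xₙ) be a random n-vector and ν > 0 such that for each coordinate i, Pr(|Xᵢ| ≥ ε) ≤ exp(-ε²/ν) for all ε > 0. Then for every θ ∈ [0, 1/(νn)), E[exp(θ‖X‖²)] ≤ 1/(1 - θνn), where ‖X‖² = ∑ᵢ Xᵢ². -/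
open MeasureTheory Set

lemma onedim5 {Ω : Type*} [MeasurableSpace Ω] (μ : Measure Ω) [IsProbabilityMeasure μ]
    (Y : Ω → ℝ) (hY : Measurable Y) (ν : ℝ) (hν : 0 < ν)
    (htail : ∀ ε : ℝ, 0 < ε → μ {ω | ε ≤ |Y ω|} ≤ ENNReal.ofReal (Real.exp (-ε ^ 2 / ν)))
    (c : ℝ) (hc0 : 0 ≤ c) (hc : c * ν < 1) :
    ∫⁻ ω, ENNReal.ofReal (Real.exp (c * Y ω ^ 2)) ∂μ ≤ ENNReal.ofReal (1 / (1 - c * ν)) := by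
  rcases eq_or_lt_of_le hc0 with rfl | hcpos
  · simp
  have hcν : 0 < c * ν := mul_pos hcpos hν
  have fmble : Measurable fun ω => Real.exp (c * Y ω ^ 2) :=
    (((hY.pow_const 2).const_mul c).exp)
  rw [lintegral_eq_lintegral_meas_lt μ (Filter.Eventually.of_forall fun ω => (Real.exp_pos _).le)
    fmble.aemeasurable]
  have hsplit : (Ioi (0:ℝ)) = Ioc 0 1 ∪ Ioi 1 := (Ioc_union_Ioi_eq_Ioi zero_le_one).symm
  rw [hsplit, lintegral_union measurableSet_Ioi Ioc_disjoint_Ioi_same]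
  have h1 : ∫⁻ t in Ioc (0:ℝ) 1, μ {a | t < Real.exp (c * Y a ^ 2)} ≤ 1 := by
    calc ∫⁻ t in Ioc (0:ℝ) 1, μ {a | t < Real.exp (c * Y a ^ 2)}
        ≤ ∫⁻ _ in Ioc (0:ℝ) 1, 1 := lintegral_mono fun t => prob_le_one
      _ = 1 := by simp [Real.volume_Ioc]
  set p : ℝ := 1 / (c * ν) with hp
  have hp1 : 1 < p := (one_lt_div hcν).mpr hc
  have h2 : ∫⁻ t in Ioi (1:ℝ), μ {a | t < Real.exp (c * Y a ^ 2)} ≤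
      ENNReal.ofReal (c * ν / (1 - c * ν)) := by
    have hbound : ∀ t ∈ Ioi (1:ℝ), μ {a | t < Real.exp (c * Y a ^ 2)} ≤
        ENNReal.ofReal (t ^ (-p)) := by
      intro t ht
      have ht1 : (1:ℝ) < t := ht
      have hlt : 0 < Real.log t := Real.log_pos ht1
      have hεpos : 0 < Real.sqrt (Real.log t / c) :=
        Real.sqrt_pos.mpr (div_pos hlt hcpos)
      have hsub : {a | t < Real.exp (c * Y a ^ 2)} ⊆
          {ω | Real.sqrt (Real.log t / c) ≤ |Y ω|} := by
        intro a ha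
        have : Real.log t < c * Y a ^ 2 := by
          have := Real.log_lt_log (lt_trans zero_lt_one ht1) ha
          rwa [Real.log_exp] at this
        have h' : Real.log t / c ≤ Y a ^ 2 := (div_le_iff₀' hcpos).mpr this.le
        calc Real.sqrt (Real.log t / c) ≤ Real.sqrt (Y a ^ 2) := Real.sqrt_le_sqrt h'
          _ = |Y a| := Real.sqrt_sq_eq_abs _
      refine le_trans (measure_mono hsub) (le_trans (htail _ hεpos) ?_)
      have hsq : Real.sqrt (Real.log t / c) ^ 2 = Real.log t / c :=
        Real.sq_sqrt (div_pos hlt hcpos).le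
      rw [hsq]
      have : t ^ (-p) = Real.exp (-(Real.log t / c) / ν) := by
        rw [Real.rpow_def_of_pos (lt_trans zero_lt_one ht1)]
        congr 1
        field_simp [hp]
        rw [hp, one_div, neg_inj, mul_assoc, inv_mul_cancel₀ hcν.ne']
      rw [this]
    calc ∫⁻ t in Ioi (1:ℝ), μ {a | t < Real.exp (c * Y a ^ 2)}
        ≤ ∫⁻ t in Ioi (1:ℝ), ENNReal.ofReal (t ^ (-p)) := by
          refine setLIntegral_mono' measurableSet_Ioi hbound
      _ = ENNReal.ofReal (∫ t in Ioi (1:ℝ), t ^ (-p)) := by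
          rw [ofReal_integral_eq_lintegral_ofReal]
          · exact integrableOn_Ioi_rpow_of_lt (by linarith) zero_lt_one
          · filter_upwards [ae_restrict_mem measurableSet_Ioi] with t ht
            exact Real.rpow_nonneg (le_trans zero_le_one ht.le) _
      _ = ENNReal.ofReal (c * ν / (1 - c * ν)) := by
          rw [integral_Ioi_rpow_of_lt (by linarith) zero_lt_one]
          congr 1
          have hne : (1:ℝ) - c * ν ≠ 0 := by linarith
          have hden : -p + 1 ≠ 0 := ne_of_lt (by linarith)
          rw [Real.one_rpow, neg_div, neg_eq_iff_eq_neg, hp]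
          have e : (-(1 / (c * ν)) + 1) = -((1 - c * ν) / (c * ν)) := by
            field_simp
            ring
          rw [e, div_neg, one_div_div]
  calc _ ≤ 1 + ENNReal.ofReal (c * ν / (1 - c * ν)) := add_le_add h1 h2
    _ = ENNReal.ofReal (1 + c * ν / (1 - c * ν)) := by
        rw [ENNReal.ofReal_add zero_le_one (div_nonneg hcν.le (by linarith)),
          ENNReal.ofReal_one]
    _ = ENNReal.ofReal (1 / (1 - c * ν)) := by
        congr 1
        have hne : (1:ℝ) - c * ν ≠ 0 := by linarith
        field_simp
        ring

/-- If each coordinate of a random `n`-vector `X` satisfies the sub-Gaussian tail bound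
`Pr(|Xᵢ| ≥ ε) ≤ exp(-ε²/ν)` for all `ε > 0`, then for every `θ ∈ [0, 1/(νn))`,
`E[exp(θ ‖X‖²)] ≤ 1/(1 - θνn)`, where `‖X‖² = ∑ᵢ Xᵢ²`. -/
theorem stmt5 {Ω : Type*} [MeasurableSpace Ω] (μ : Measure Ω) [IsProbabilityMeasure μ]
    (n : ℕ) (hn : 0 < n) (X : Ω → Fin n → ℝ) (hX : Measurable X)
    (ν : ℝ) (hν : 0 < ν)
    (htail : ∀ i : Fin n, ∀ ε : ℝ, 0 < ε →
      μ {ω | ε ≤ |X ω i|} ≤ ENNReal.ofReal (Real.exp (-ε ^ 2 / ν)))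
    (θ : ℝ) (hθ : θ ∈ Set.Ico 0 (1 / (ν * n))) :
    ∫⁻ ω, ENNReal.ofReal (Real.exp (θ * ∑ i, X ω i ^ 2)) ∂μ ≤
      ENNReal.ofReal (1 / (1 - θ * ν * n)) := by
  obtain ⟨hθ0, hθn⟩ := hθ
  have hnR : (0:ℝ) < n := Nat.cast_pos.mpr hn
  set c : ℝ := θ * n with hcdef
  have hc0 : 0 ≤ c := mul_nonneg hθ0 hnR.le
  have hcν : c * ν < 1 := by
    have := (lt_div_iff₀ (mul_pos hν hnR)).mp hθn
    nlinarith
  -- Jensen step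
  have hjensen : ∀ ω, Real.exp (θ * ∑ i, X ω i ^ 2) ≤
      ∑ i, (1 / (n:ℝ)) * Real.exp (c * X ω i ^ 2) := by
    intro ω
    have hkey := convexOn_exp.map_sum_le (t := Finset.univ) (w := fun _ : Fin n => 1 / (n:ℝ))
      (p := fun i => c * X ω i ^ 2) (fun i _ => by positivity)
      (by simp [Finset.card_univ]; field_simp) (fun i _ => Set.mem_univ _)
    have hsum : ∑ i, (1/(n:ℝ)) • (c * X ω i ^ 2) = θ * ∑ i, X ω i ^ 2 := by
      simp only [smul_eq_mul, hcdef, Finset.mul_sum]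
      refine Finset.sum_congr rfl fun i _ => ?_
      field_simp
    rw [hsum] at hkey
    simpa [smul_eq_mul] using hkey
  have hmeasi : ∀ i : Fin n, Measurable fun ω => Real.exp (c * X ω i ^ 2) := fun i =>
    ((((measurable_pi_apply i).comp hX).pow_const 2).const_mul c).exp
  calc ∫⁻ ω, ENNReal.ofReal (Real.exp (θ * ∑ i, X ω i ^ 2)) ∂μ
      ≤ ∫⁻ ω, ENNReal.ofReal (∑ i, (1/(n:ℝ)) * Real.exp (c * X ω i ^ 2)) ∂μ :=
        lintegral_mono fun ω => ENNReal.ofReal_le_ofReal (hjensen ω)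
    _ = ∫⁻ ω, ∑ i, ENNReal.ofReal ((1/(n:ℝ)) * Real.exp (c * X ω i ^ 2)) ∂μ := by
        congr 1; ext ω
        rw [ENNReal.ofReal_sum_of_nonneg (fun i _ => by positivity)]
    _ = ∑ i, ∫⁻ ω, ENNReal.ofReal ((1/(n:ℝ)) * Real.exp (c * X ω i ^ 2)) ∂μ :=
        lintegral_finset_sum _ (fun i _ => ((hmeasi i).const_mul _).ennreal_ofReal)
    _ ≤ ∑ _i : Fin n, ENNReal.ofReal (1/(n:ℝ)) * ENNReal.ofReal (1/(1 - c*ν)) := by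
        refine Finset.sum_le_sum fun i _ => ?_
        have heq : ∀ ω, ENNReal.ofReal ((1/(n:ℝ)) * Real.exp (c * X ω i ^ 2)) =
            ENNReal.ofReal (1/(n:ℝ)) * ENNReal.ofReal (Real.exp (c * X ω i ^ 2)) := fun ω =>
          ENNReal.ofReal_mul (by positivity)
        simp_rw [heq]
        rw [lintegral_const_mul _ (hmeasi i).ennreal_ofReal]
        exact mul_le_mul_right
          (onedim5 μ _ ((measurable_pi_apply i).comp hX) ν hν (htail i) c hc0 hcν) _
    _ = ENNReal.ofReal (1 / (1 - θ * ν * n)) := by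
        rw [Finset.sum_const, Finset.card_univ, Fintype.card_fin, nsmul_eq_mul,
          ← ENNReal.ofReal_mul (by positivity), ← ENNReal.ofReal_natCast n,
          ← ENNReal.ofReal_mul (by positivity)]
        congr 1
        have h1 : 1 - c*ν = 1 - θ*ν*(n:ℝ) := by rw [hcdef]; ring
        rw [h1, ← mul_assoc, mul_one_div, one_div, mul_inv_cancel₀ hnR.ne']
end

section
/- Let h = f + g with f differentiable with L-Lipschitz gradient and g convex lower-semicontinuous, and let x_{k+1} = prox_{(1/L)g}(x_k - (1/L)(∇f(x_k) + e_k)). Then h(x_{k+1}) ≤ h(x_k) + (1/L)‖e_k‖² - (L/4)‖x_k - x_{k+1}‖². -/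
local notation "⟪" x ", " y "⟫" => @inner ℝ _ _ x y

lemma descent_lemma {n : ℕ} (f : EuclideanSpace ℝ (Fin n) → ℝ)
    (f' : EuclideanSpace ℝ (Fin n) → EuclideanSpace ℝ (Fin n)) (L : ℝ) (hL : 0 < L)
    (hf : ∀ x, HasGradientAt f (f' x) x)
    (hlip : ∀ x y, ‖f' x - f' y‖ ≤ L * ‖x - y‖)
    (x y : EuclideanSpace ℝ (Fin n)) :
    f y ≤ f x + ⟪f' x, y - x⟫ + L / 2 * ‖y - x‖ ^ 2 := by
  set d := y - x with hd
  set q : ℝ → ℝ := fun t => f (x + t • d) - t * ⟪f' x, d⟫ - L / 2 * t ^ 2 * ‖d‖ ^ 2 with hq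
  have hline : ∀ t : ℝ, HasDerivAt (fun t : ℝ => x + t • d) d t := by
    intro t
    simpa using ((hasDerivAt_id t).smul_const d).const_add x
  have hderiv : ∀ t : ℝ,
      HasDerivAt q (⟪f' (x + t • d), d⟫ - ⟪f' x, d⟫ - L * t * ‖d‖ ^ 2) t := by
    intro t
    have h1 : HasDerivAt (fun t : ℝ => f (x + t • d)) (⟪f' (x + t • d), d⟫) t := by
      have := ((hf (x + t • d)).hasFDerivAt).comp_hasDerivAt t (hline t)
      simp at this
      exact this
    have h2 : HasDerivAt (fun t : ℝ => t * ⟪f' x, d⟫) (⟪f' x, d⟫) t := by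
      simpa using (hasDerivAt_id t).mul_const (⟪f' x, d⟫ : ℝ)
    have h3 : HasDerivAt (fun t : ℝ => L / 2 * t ^ 2 * ‖d‖ ^ 2) (L * t * ‖d‖ ^ 2) t := by
      have := ((hasDerivAt_pow 2 t).const_mul (L / 2)).mul_const (‖d‖ ^ 2)
      exact this.congr_deriv (by rw [show (2:ℕ) - 1 = 1 from rfl]; push_cast; ring)
    exact (h1.sub h2).sub h3
  have hanti : AntitoneOn q (Set.Icc (0:ℝ) 1) := by
    refine antitoneOn_of_deriv_nonpos (convex_Icc 0 1)
      (fun t _ => ((hderiv t).differentiableAt).continuousAt.continuousWithinAt)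
      (fun t _ => ((hderiv t).differentiableAt).differentiableWithinAt) ?_
    intro t ht
    rw [interior_Icc] at ht
    rw [(hderiv t).deriv]
    have h1 : (⟪f' (x + t • d) - f' x, d⟫ : ℝ) ≤ ‖f' (x + t • d) - f' x‖ * ‖d‖ :=
      real_inner_le_norm _ _
    have h2 : ‖f' (x + t • d) - f' x‖ ≤ L * (t * ‖d‖) := by
      have := hlip (x + t • d) x
      simpa [norm_smul, abs_of_pos ht.1, mul_assoc] using this
    have h3 : (⟪f' (x + t • d) - f' x, d⟫ : ℝ) = ⟪f' (x + t • d), d⟫ - ⟪f' x, d⟫ := by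
      rw [inner_sub_left]
    nlinarith [norm_nonneg d, ht.1.le, norm_nonneg (f' (x + t • d) - f' x)]
  have h10 : q 1 ≤ q 0 :=
    hanti (Set.left_mem_Icc.2 zero_le_one) (Set.right_mem_Icc.2 zero_le_one) zero_le_one
  have e1 : x + (1:ℝ) • d = y := by simp [hd]
  have e0 : x + (0:ℝ) • d = x := by simp
  simp only [hq] at h10
  rw [e1, e0] at h10
  linarith [h10]

/-- Sufficient decrease of the proximal-gradient step with gradient error: if `h = f + g` with
`f` differentiable with `L`-Lipschitz gradient, `g` convex lower-semicontinuous on its domain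
`s`, and `x' = prox_{(1/L)g}(x_k - (1/L)(∇f(x_k) + e))` (i.e. `x'` minimizes
`(1/L)g(y) + (1/2)‖y - (x_k - (1/L)(∇f(x_k)+e))‖²` over `s`), then
`h(x') ≤ h(x_k) + (1/L)‖e‖² - (L/4)‖x_k - x'‖²`. -/
theorem stmt13 {n : ℕ} (f : EuclideanSpace ℝ (Fin n) → ℝ)
    (f' : EuclideanSpace ℝ (Fin n) → EuclideanSpace ℝ (Fin n)) (L : ℝ) (hL : 0 < L)
    (hf : ∀ x, HasGradientAt f (f' x) x)
    (hlip : ∀ x y, ‖f' x - f' y‖ ≤ L * ‖x - y‖)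
    (s : Set (EuclideanSpace ℝ (Fin n))) (hs : Convex ℝ s)
    (g : EuclideanSpace ℝ (Fin n) → ℝ) (hg : ConvexOn ℝ s g)
    (hlsc : LowerSemicontinuousOn g s)
    (xk e x' : EuclideanSpace ℝ (Fin n)) (hxk : xk ∈ s) (hx' : x' ∈ s)
    (hmin : ∀ z ∈ s,
      (1 / L) * g x' + (1 / 2) * ‖x' - (xk - (1 / L) • (f' xk + e))‖ ^ 2 ≤
        (1 / L) * g z + (1 / 2) * ‖z - (xk - (1 / L) • (f' xk + e))‖ ^ 2) :
    f x' + g x' ≤ f xk + g xk + (1 / L) * ‖e‖ ^ 2 - (L / 4) * ‖xk - x'‖ ^ 2 := by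
  set u := xk - (1 / L) • (f' xk + e) with hu
  -- variational inequality at z = xk
  have hVI : (0:ℝ) ≤ (1 / L) * (g xk - g x') + ⟪x' - u, xk - x'⟫ := by
    set A : ℝ := (1 / L) * (g xk - g x') + ⟪x' - u, xk - x'⟫ with hA
    set B : ℝ := (1 / 2) * ‖xk - x'‖ ^ 2 with hB
    have hB0 : 0 ≤ B := by rw [hB]; positivity
    have hL' : (0:ℝ) < 1 / L := by positivity
    have key : ∀ t : ℝ, 0 < t → t ≤ 1 → -(t * B) ≤ A := by
      intro t ht0 ht1
      have hp : x' + t • (xk - x') ∈ s := by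
        have := hs hx' hxk (show (0:ℝ) ≤ 1 - t by linarith) ht0.le (by ring)
        convert this using 1
        module
      have hgle : g (x' + t • (xk - x')) ≤ (1 - t) * g x' + t * g xk := by
        have := hg.2 hx' hxk (show (0:ℝ) ≤ 1 - t by linarith) ht0.le (by ring)
        rw [smul_eq_mul, smul_eq_mul] at this
        exact (congrArg g (by module)).trans_le this
      have hmp := hmin _ hp
      have hexp : ‖x' + t • (xk - x') - u‖ ^ 2 =
          ‖x' - u‖ ^ 2 + 2 * (t * ⟪x' - u, xk - x'⟫) + t ^ 2 * ‖xk - x'‖ ^ 2 := by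
        have h : x' + t • (xk - x') - u = (x' - u) + t • (xk - x') := by abel
        rw [h, norm_add_sq_real, real_inner_smul_right, norm_smul]
        simp only [Real.norm_eq_abs, mul_pow, sq_abs]
        try ring
      rw [hexp] at hmp
      have hmul := mul_le_mul_of_nonneg_left hgle hL'.le
      rw [hA, hB]
      nlinarith [hmp, hmul]
    by_contra hneg
    push_neg at hneg
    clear_value A B
    have hBpos : (0:ℝ) < B + 1 := by linarith
    have htpos : (0:ℝ) < (-A) / (B + 1) := div_pos (by linarith) hBpos
    set t := min 1 ((-A) / (B + 1)) with htdef
    have ht0 : 0 < t := lt_min one_pos htpos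
    have ht1 : t ≤ 1 := min_le_left _ _
    have ht2 : t ≤ (-A) / (B + 1) := min_le_right _ _
    clear_value t
    have hk := key t ht0 ht1
    have h5 : t * B ≤ ((-A) / (B + 1)) * B :=
      mul_le_mul_of_nonneg_right ht2 hB0
    have h6 : ((-A) / (B + 1)) * B < -A := by
      rw [div_mul_eq_mul_div, div_lt_iff₀ hBpos]
      nlinarith
    linarith
  -- rewrite the inner product
  set b : ℝ := ‖xk - x'‖ with hb
  set a : ℝ := ‖e‖ with ha
  set I1 : ℝ := ⟪f' xk, xk - x'⟫ with hI1
  set I2 : ℝ := ⟪e, xk - x'⟫ with hI2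
  have hxu : x' - u = (x' - xk) + (1 / L) • (f' xk + e) := by rw [hu]; abel
  have hI : (⟪x' - u, xk - x'⟫ : ℝ) = -(b ^ 2) + (1 / L) * (I1 + I2) := by
    rw [hxu, inner_add_left, real_inner_smul_left, inner_add_left]
    have hx2 : x' - xk = -(xk - x') := by abel
    rw [hx2, inner_neg_left, real_inner_self_eq_norm_sq]
  rw [hI] at hVI
  -- multiply VI by L
  have hVI2 : g x' ≤ g xk - L * b ^ 2 + I1 + I2 := by
    have hL' : (0:ℝ) < 1 / L := by positivity
    have heq : (1 / L) * (g xk - g x') + (-(b ^ 2) + (1 / L) * (I1 + I2)) =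
        (1 / L) * ((g xk - g x') + I1 + I2 - L * b ^ 2) := by
      field_simp
      try ring
    rw [heq] at hVI
    have := (mul_nonneg_iff_of_pos_left hL').mp hVI
    linarith
  -- descent lemma
  have hdes := descent_lemma f f' L hL hf hlip xk x'
  have hflip : (⟪f' xk, x' - xk⟫ : ℝ) = -I1 := by
    have hx2 : x' - xk = -(xk - x') := by abel
    rw [hx2, inner_neg_right, hI1]
  have hbrev : ‖x' - xk‖ = b := by rw [hb, norm_sub_rev]
  rw [hflip, hbrev] at hdes
  -- Young's inequality
  have hY : I2 ≤ (1 / L) * a ^ 2 + (L / 4) * b ^ 2 := by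
    have h1 : I2 ≤ a * b := real_inner_le_norm _ _
    have h3 : L * (a * b) ≤ a ^ 2 + (L ^ 2 / 4) * b ^ 2 := by
      nlinarith [sq_nonneg (2 * a - L * b)]
    have h4 : a * b = (1 / L) * (L * (a * b)) := by field_simp
    have h5 : (1 / L) * (L * (a * b)) ≤ (1 / L) * (a ^ 2 + (L ^ 2 / 4) * b ^ 2) :=
      mul_le_mul_of_nonneg_left h3 (by positivity)
    have h6 : (1 / L) * (a ^ 2 + (L ^ 2 / 4) * b ^ 2) =
        (1 / L) * a ^ 2 + (L / 4) * b ^ 2 := by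
      field_simp
      try ring
    linarith
  linarith
end

section
/- Let γ̄₀, ..., γ̄_{k-1}: (0,∞) → (0,∞] be convex functions with each log γ̄ᵢ convex and γ̄ᵢ(0⁺) limit 1 (log γ̄ᵢ(0) = 0), let ρ ∈ (0,1), and set R_k = ∑_{i=0}^{k-1} ρ^i. Then for every θ > 0: ∑_{i=0}^{k-1} (ρ^{k-1-i}/R_k) · log γ̄ᵢ(θ R_k) ≥ ∑_{i=0}^{k-1} log γ̄ᵢ(θ ρ^{k-1-i}), and consequently log((1/R_k) ∑_{i=0}^{k-1} ρ^{k-1-i} γ̄ᵢ(θ R_k)) ≥ ∑_{i=0}^{k-1} log γ̄ᵢ(θ ρ^{k-1-i}). -/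
/-- Comparison of cumulant-generating-type bounds: if each `log γᵢ` is convex on `[0,∞)` with
`γᵢ(0) = 1` and `γᵢ > 0`, then with `R_k = ∑_{i<k} ρ^i` and any `θ > 0`,
`∑_{i<k} log γᵢ(θ ρ^{k-1-i}) ≤ ∑_{i<k} (ρ^{k-1-i}/R_k) log γᵢ(θ R_k)` and consequently
`∑_{i<k} log γᵢ(θ ρ^{k-1-i}) ≤ log((1/R_k) ∑_{i<k} ρ^{k-1-i} γᵢ(θ R_k))`. -/
theorem stmt17 (k : ℕ) (hk : 0 < k) (γ : ℕ → ℝ → ℝ) (ρ : ℝ) (hρ : ρ ∈ Set.Ioo (0:ℝ) 1)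
    (hpos : ∀ i θ, 0 ≤ θ → 0 < γ i θ)
    (hconv : ∀ i, ConvexOn ℝ (Set.Ici 0) fun θ => Real.log (γ i θ))
    (h0 : ∀ i, γ i 0 = 1) (θ : ℝ) (hθ : 0 < θ) :
    (∑ i ∈ Finset.range k, Real.log (γ i (θ * ρ ^ (k - 1 - i))) ≤
      ∑ i ∈ Finset.range k, (ρ ^ (k - 1 - i) / ∑ j ∈ Finset.range k, ρ ^ j) *
        Real.log (γ i (θ * ∑ j ∈ Finset.range k, ρ ^ j))) ∧
    (∑ i ∈ Finset.range k, Real.log (γ i (θ * ρ ^ (k - 1 - i))) ≤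
      Real.log ((∑ j ∈ Finset.range k, ρ ^ j)⁻¹ *
        ∑ i ∈ Finset.range k, ρ ^ (k - 1 - i) * γ i (θ * ∑ j ∈ Finset.range k, ρ ^ j))) := by
  obtain ⟨hρ0, hρ1⟩ := hρ
  set R := ∑ j ∈ Finset.range k, ρ ^ j with hRdef
  have hR : 0 < R := Finset.sum_pos (fun j _ => pow_pos hρ0 j) ⟨0, Finset.mem_range.mpr hk⟩
  have hsumrefl : ∑ i ∈ Finset.range k, ρ ^ (k - 1 - i) = R := by
    rw [hRdef]
    exact Finset.sum_range_reflect (fun j => ρ ^ j) k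
  have hterm : ∀ i ∈ Finset.range k,
      Real.log (γ i (θ * ρ ^ (k - 1 - i))) ≤
        (ρ ^ (k - 1 - i) / R) * Real.log (γ i (θ * R)) := by
    intro i _
    have hle : ρ ^ (k - 1 - i) ≤ R := by
      apply Finset.single_le_sum (fun j _ => (pow_pos hρ0 j).le)
      exact Finset.mem_range.mpr (by omega)
    have hs0 : 0 ≤ ρ ^ (k - 1 - i) / R := div_nonneg (pow_pos hρ0 _).le hR.le
    have hs1 : ρ ^ (k - 1 - i) / R ≤ 1 := div_le_one_of_le₀ hle hR.le
    have hx : (θ * R) ∈ Set.Ici (0:ℝ) := le_of_lt (mul_pos hθ hR)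
    have h := (hconv i).2 hx (Set.self_mem_Ici (a := (0:ℝ))) hs0
      (by linarith : (0:ℝ) ≤ 1 - ρ ^ (k - 1 - i) / R) (by ring)
    simp only [smul_eq_mul, mul_zero, add_zero, h0 i, Real.log_one] at h
    have harg : ρ ^ (k - 1 - i) / R * (θ * R) = θ * ρ ^ (k - 1 - i) := by
      field_simp
    rw [harg] at h
    linarith
  have first := Finset.sum_le_sum hterm
  refine ⟨first, first.trans ?_⟩
  have hγpos : ∀ i ∈ Finset.range k, γ i (θ * R) ∈ Set.Ioi (0:ℝ) :=
    fun i _ => hpos i _ (le_of_lt (mul_pos hθ hR))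
  have hw0 : ∀ i ∈ Finset.range k, (0:ℝ) ≤ ρ ^ (k - 1 - i) / R :=
    fun i _ => div_nonneg (pow_pos hρ0 _).le hR.le
  have hw1 : ∑ i ∈ Finset.range k, ρ ^ (k - 1 - i) / R = 1 := by
    rw [← Finset.sum_div, hsumrefl, div_self hR.ne']
  have hjensen := (strictConcaveOn_log_Ioi.concaveOn).le_map_sum hw0 hw1 hγpos
  simp only [smul_eq_mul] at hjensen
  calc ∑ i ∈ Finset.range k, (ρ ^ (k - 1 - i) / R) * Real.log (γ i (θ * R))
      ≤ Real.log (∑ i ∈ Finset.range k, (ρ ^ (k - 1 - i) / R) * γ i (θ * R)) := hjensen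
    _ = Real.log (R⁻¹ * ∑ i ∈ Finset.range k, ρ ^ (k - 1 - i) * γ i (θ * R)) := by
        congr 1
        have he : ∀ i, ρ ^ (k - 1 - i) / R * γ i (θ * R)
            = R⁻¹ * (ρ ^ (k - 1 - i) * γ i (θ * R)) := fun i => by ring
        rw [Finset.sum_congr rfl (fun i _ => he i), ← Finset.mul_sum]
end
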